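/- Fix an integer K ≥ 1. There exists a finite metric measure space (X,d,μ) satisfying the doubling condition μ(B(x,2r)) ≤ K·μ(B(x,r)) for all x and r > 0, such that the Hardy-Littlewood maximal operator M satisfies ‖M‖_{L¹(X)→L^{1,∞}(X)} ≥ K − 1. Concretely, one may take X to be the star graph with hub v₀ connected to (K−1)² spokes, with graph metric, where μ assigns mass K−1 to v₀ and mass 1 to each spoke. -/

import Mathlib

open MeasureTheory Metric

/-- The star space with hub `none` and `n` spokes. -/
abbrev SP (n : ℕ) : Type := Option (Fin n)

instance {n : ℕ} : Fintype (SP n) := inferInstanceAs (Fintype (Option (Fin n)))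
instance {n : ℕ} : DecidableEq (SP n) := inferInstanceAs (DecidableEq (Option (Fin n)))
instance {n : ℕ} : MeasurableSpace (SP n) := ⊤
instance {n : ℕ} : MeasurableSingletonClass (SP n) := ⟨fun _ => trivial⟩

noncomputable instance SP.metricSpace {n : ℕ} : MetricSpace (SP n) where
  dist x y := if x = y then 0 else if x = none ∨ y = none then 1 else 2
  dist_self x := by simp
  dist_comm x y := by
    try dsimp only
    by_cases hxy : x = y
    · simp [hxy]
    · rw [if_neg hxy, if_neg (Ne.symm hxy)]
      simp [or_comm]
  dist_triangle x y z := by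
    try dsimp only
    split_ifs <;> simp_all <;> norm_num
  eq_of_dist_eq_zero := by
    intro x y h
    try dsimp only at h
    split_ifs at h <;> simp_all

lemma SP.dist_def {n : ℕ} (x y : SP n) :
    dist x y = if x = y then 0 else if x = none ∨ y = none then 1 else 2 := rfl

lemma SP.sum_univ {n : ℕ} {M : Type*} [AddCommMonoid M] (f : SP n → M) :
    ∑ x : SP n, f x = f none + ∑ i : Fin n, f (some i) :=
  Fintype.sum_option f

/-- Weight function: hub has mass `m`, spokes have mass 1. -/
noncomputable def sw {n : ℕ} (m : ℕ) (x : SP n) : ENNReal := if x = none then m else 1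

/-- The star measure: sum of weighted Dirac measures. -/
noncomputable def sμ (n m : ℕ) : Measure (SP n) :=
  ∑ x : SP n, sw m x • Measure.dirac x

lemma sμ_apply (n m : ℕ) (s : Set (SP n)) :
    sμ n m s = ∑ x : SP n, s.indicator (sw m) x := by
  classical
  rw [sμ, Measure.finset_sum_apply]
  refine Finset.sum_congr rfl fun x _ => ?_
  rw [Measure.smul_apply, Measure.dirac_apply' _ (MeasurableSpace.measurableSet_top)]
  simp [Set.indicator_apply, mul_ite]

lemma sμ_singleton (n m : ℕ) (x : SP n) : sμ n m {x} = sw m x := by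
  classical
  rw [sμ_apply]
  simp [Set.indicator_apply, Finset.sum_ite_eq']

lemma sμ_pair (n m : ℕ) (i : Fin n) : sμ n m {some i, none} = m + 1 := by
  classical
  rw [sμ_apply, SP.sum_univ]
  have : (Finset.filter (fun x : Fin n => some x = some i) Finset.univ) = {i} := by
    ext j; simp
  simp [Set.indicator_apply, sw, this]

lemma sμ_univ (n m : ℕ) : sμ n m Set.univ = m + n := by
  classical
  rw [sμ_apply, SP.sum_univ]
  simp [sw]

instance (n m : ℕ) : IsFiniteMeasure (sμ n m) :=
  ⟨by rw [sμ_univ]; exact ENNReal.add_lt_top.2 ⟨ENNReal.natCast_lt_top m, ENNReal.natCast_lt_top n⟩⟩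

lemma sμ_restrict_finset_sum (n m : ℕ) (s : Set (SP n)) :
    (sμ n m).restrict s = ∑ x : SP n, (sw m x • Measure.dirac x).restrict s := by
  rw [sμ]
  induction (Finset.univ : Finset (SP n)) using Finset.cons_induction with
  | empty => simp
  | cons a t ha ih => rw [Finset.sum_cons, Finset.sum_cons, Measure.restrict_add, ih]

lemma sw_smul_finite {n : ℕ} (m : ℕ) (x : SP n) :
    IsFiniteMeasure (sw m x • Measure.dirac x) := by
  constructor
  rw [Measure.smul_apply, smul_eq_mul]
  have : sw m x < ⊤ := by
    rw [sw]; split <;> simp [ENNReal.natCast_lt_top]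
  exact ENNReal.mul_lt_top this (by simp)

lemma sμ_setIntegral (n m : ℕ) (g : SP n → ℝ) (s : Set (SP n)) :
    ∫ y in s, g y ∂(sμ n m) = ∑ x : SP n, (sw m x).toReal * s.indicator g x := by
  classical
  rw [sμ_restrict_finset_sum, integral_finset_sum_measure (fun x _ => by
    haveI := sw_smul_finite (n := n) m x
    exact Integrable.of_finite)]
  refine Finset.sum_congr rfl fun x _ => ?_
  rw [Measure.restrict_smul, integral_smul_measure, setIntegral_dirac]
  simp [Set.indicator_apply, smul_eq_mul]

lemma sμ_integral (n m : ℕ) (g : SP n → ℝ) :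
    ∫ y, g y ∂(sμ n m) = ∑ x : SP n, (sw m x).toReal * g x := by
  have := sμ_setIntegral n m g Set.univ
  simpa using this

lemma SP.closedBall_some (n : ℕ) (i : Fin n) :
    closedBall (some i : SP n) 1 = {some i, none} := by
  ext y
  rw [mem_closedBall, SP.dist_def]
  rcases y with _ | j
  · simp
  · by_cases hj : j = i <;> simp [hj] <;> norm_num

lemma SP.closedBall_none (n : ℕ) {r : ℝ} (h0 : 0 ≤ r) (h1 : r < 1) :
    closedBall (none : SP n) r = {none} := by
  ext y
  rw [mem_closedBall, SP.dist_def]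
  rcases y with _ | j
  · simp [h0]
  · simp; linarith

lemma SP.closedBall_some_subset (n : ℕ) (i : Fin n) {r : ℝ} (h : r < 2) :
    closedBall (some i : SP n) r ⊆ {some i, none} := by
  intro y hy
  rw [mem_closedBall, SP.dist_def] at hy
  rcases y with _ | j
  · simp
  · by_cases hj : j = i
    · simp [hj]
    · simp [hj] at hy; linarith

/-- The Hardy–Littlewood maximal function of `f` with respect to the measure `μ`,
using closed balls. -/
noncomputable def HLmax {X : Type*} [MetricSpace X] [MeasurableSpace X]
    (μ : Measure X) (f : X → ℝ) (x : X) : ℝ :=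
  ⨆ r : {r : ℝ // 0 < r}, (μ (closedBall x r)).toReal⁻¹ * ∫ y in closedBall x r, |f y| ∂μ

/-- There is a finite metric measure space satisfying the doubling condition
`μ(B(x,2r)) ≤ K·μ(B(x,r))` whose Hardy–Littlewood maximal operator has weak (1,1)
norm at least `K - 1`. -/
theorem stmt3 (K : ℕ) (hK : 1 ≤ K) :
    ∃ (X : Type) (_ : MetricSpace X) (_ : MeasurableSpace X) (_ : Fintype X)
      (μ : Measure X),
      (∀ x : X, ∀ r : ℝ, 0 < r →
        μ (closedBall x (2 * r)) ≤ (K : ENNReal) * μ (closedBall x r)) ∧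
      (∀ C : ℝ,
        (∀ f : X → ℝ, ∀ lam : ℝ, 0 < lam →
          lam * (μ {x | lam < HLmax μ f x}).toReal ≤ C * ∫ x, |f x| ∂μ) →
        (K : ℝ) - 1 ≤ C) := by
  classical
  rcases eq_or_lt_of_le hK with h1 | h2
  · -- K = 1 : use a one-point space
    refine ⟨PUnit, inferInstance, inferInstance, inferInstance,
      Measure.dirac PUnit.unit, ?_, ?_⟩
    · intro x r hr
      have hb : ∀ s : ℝ, 0 ≤ s → closedBall x s = Set.univ := by
        intro s hs
        ext y
        simp [mem_closedBall, Subsingleton.elim y x, hs]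
      rw [hb _ (by linarith), hb _ hr.le, ← h1]
      simp
    · intro C hC
      have h3 := hC (fun _ => (1:ℝ)) 1 one_pos
      have h4 : (∫ x, |(1:ℝ)| ∂(Measure.dirac PUnit.unit)) = 1 := by
        simp [integral_dirac]
      rw [h4] at h3
      have h5 : 0 ≤ (Measure.dirac PUnit.unit
          {x | 1 < HLmax (Measure.dirac PUnit.unit) (fun _ => (1:ℝ)) x}).toReal :=
        ENNReal.toReal_nonneg
      rw [← h1]
      push_cast
      linarith
  · -- K ≥ 2
    obtain ⟨m, rfl⟩ : ∃ m, K = m + 1 := ⟨K - 1, (Nat.succ_pred_eq_of_pos hK).symm⟩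
    have hm1 : 1 ≤ m := by omega
    have hmR : (1:ℝ) ≤ m := by exact_mod_cast hm1
    have hm0 : (0:ℝ) < m := by linarith
    set n := m * m with hn
    refine ⟨SP n, inferInstance, inferInstance, inferInstance, sμ n m, ?_, ?_⟩
    · -- doubling
      intro x r hr
      have hcast : ((m + 1 : ℕ) : ENNReal) = (m : ENNReal) + 1 := by push_cast; ring
      rcases x with _ | i
      · -- hub
        calc sμ n m (closedBall none (2 * r)) ≤ sμ n m Set.univ :=
              measure_mono (Set.subset_univ _)
          _ = (m : ENNReal) + n := sμ_univ n m
          _ = ((m + 1 : ℕ) : ENNReal) * sμ n m {none} := by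
              rw [sμ_singleton, hcast, hn]
              simp only [sw, if_pos rfl]
              push_cast; ring
          _ ≤ ((m + 1 : ℕ) : ENNReal) * sμ n m (closedBall none r) :=
              mul_le_mul_right (measure_mono
                (Set.singleton_subset_iff.2 (mem_closedBall_self hr.le))) _
      · rcases lt_or_ge r 1 with hr1 | hr1
        · -- spoke, r < 1
          calc sμ n m (closedBall (some i) (2 * r))
              ≤ sμ n m {some i, none} :=
                measure_mono (SP.closedBall_some_subset n i (by linarith))
            _ = (m : ENNReal) + 1 := sμ_pair n m i
            _ = ((m + 1 : ℕ) : ENNReal) * sμ n m {some i} := by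
                rw [sμ_singleton, hcast]
                simp [sw]
            _ ≤ ((m + 1 : ℕ) : ENNReal) * sμ n m (closedBall (some i) r) :=
                mul_le_mul_right (measure_mono
                  (Set.singleton_subset_iff.2 (mem_closedBall_self hr.le))) _
        · -- spoke, r ≥ 1
          calc sμ n m (closedBall (some i) (2 * r)) ≤ sμ n m Set.univ :=
                measure_mono (Set.subset_univ _)
            _ = (m : ENNReal) + n := sμ_univ n m
            _ ≤ ((m + 1 : ℕ) : ENNReal) * ((m : ENNReal) + 1) := by
                rw [hcast, hn]
                push_cast
                calc (m : ENNReal) + (m : ENNReal) * m = (m : ENNReal) * (m + 1) := by ring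
                  _ ≤ ((m : ENNReal) + 1) * ((m : ENNReal) + 1) := by gcongr; exact le_self_add
            _ = ((m + 1 : ℕ) : ENNReal) * sμ n m {some i, none} := by rw [sμ_pair]
            _ ≤ ((m + 1 : ℕ) : ENNReal) * sμ n m (closedBall (some i) r) := by
                refine mul_le_mul_right (measure_mono ?_) _
                rw [← SP.closedBall_some n i]
                exact closedBall_subset_closedBall hr1
    · -- weak (1,1) lower bound
      intro C hC
      set f : SP n → ℝ := fun x => if x = none then (1:ℝ) else 0 with hf
      have habs : ∀ x, |f x| = f x := by
        intro x; rw [hf]; dsimp only; split <;> norm_num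
      have hint : ∫ x, |f x| ∂(sμ n m) = m := by
        rw [sμ_integral, SP.sum_univ]
        simp [habs, hf, sw]
      -- the key pointwise lower bound for HLmax
      have key : ∀ lam : ℝ, 0 < lam → lam < m / (m + 1) →
          ∀ x : SP n, lam < HLmax (sμ n m) f x := by
        intro lam h0 h1 x
        have hlam1 : lam < 1 := by
          have : (m : ℝ) / (m + 1) < 1 := by
            rw [div_lt_one (by linarith)]; linarith
          linarith
        have hbdd : BddAbove (Set.range fun r : {r : ℝ // 0 < r} =>
            (sμ n m (closedBall x r)).toReal⁻¹ *
              ∫ y in closedBall x (r : ℝ), |f y| ∂(sμ n m)) := by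
          refine ⟨(m : ℝ), ?_⟩
          rintro _ ⟨r, rfl⟩
          have hI0 : 0 ≤ ∫ y in closedBall x (r : ℝ), |f y| ∂(sμ n m) :=
            setIntegral_nonneg MeasurableSpace.measurableSet_top fun y _ => abs_nonneg _
          have hIle : (∫ y in closedBall x (r : ℝ), |f y| ∂(sμ n m)) ≤
              ∫ y, |f y| ∂(sμ n m) :=
            setIntegral_le_integral Integrable.of_finite
              (Filter.Eventually.of_forall fun y => abs_nonneg _)
          have h1le : (1 : ENNReal) ≤ sμ n m (closedBall x (r : ℝ)) := by
            calc (1 : ENNReal) ≤ sw m x := by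
                  rw [sw]; split
                  · exact_mod_cast hm1
                  · exact le_rfl
              _ = sμ n m {x} := (sμ_singleton n m x).symm
              _ ≤ _ := measure_mono (Set.singleton_subset_iff.2 (mem_closedBall_self r.2.le))
          have htr : (1 : ℝ) ≤ (sμ n m (closedBall x (r : ℝ))).toReal := by
            rw [← ENNReal.toReal_one]
            exact ENNReal.toReal_mono (measure_ne_top _ _) h1le
          have hinv : (sμ n m (closedBall x (r : ℝ))).toReal⁻¹ ≤ 1 := by
            exact inv_le_one_of_one_le₀ htr
          calc (sμ n m (closedBall x (r : ℝ))).toReal⁻¹ *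
                ∫ y in closedBall x (r : ℝ), |f y| ∂(sμ n m)
              ≤ 1 * (m : ℝ) := by
                apply mul_le_mul hinv (hIle.trans_eq hint) hI0 one_pos.le
            _ = m := one_mul _
        rcases x with _ | i
        · -- hub: take r = 1/2
          have hball : closedBall (none : SP n) ((1:ℝ)/2) = {none} :=
            SP.closedBall_none n (by norm_num) (by norm_num)
          have hterm : (sμ n m (closedBall (none : SP n) ((1:ℝ)/2))).toReal⁻¹ *
              ∫ y in closedBall (none : SP n) ((1:ℝ)/2), |f y| ∂(sμ n m) = 1 := by
            rw [hball, sμ_singleton, sμ_setIntegral, SP.sum_univ]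
            simp only [sw, if_pos rfl]
            simp [Set.indicator_apply, hf]
            field_simp
          exact lt_of_lt_of_le (by rw [hterm]; exact hlam1)
            (le_ciSup hbdd ⟨(1:ℝ)/2, by norm_num⟩)
        · -- spoke: take r = 1
          have hball : closedBall (some i : SP n) 1 = {some i, none} :=
            SP.closedBall_some n i
          have hterm : (sμ n m (closedBall (some i : SP n) 1)).toReal⁻¹ *
              ∫ y in closedBall (some i : SP n) 1, |f y| ∂(sμ n m) = m / (m + 1) := by
            rw [hball, sμ_pair, sμ_setIntegral, SP.sum_univ]
            simp [Set.indicator_apply, hf, sw, ENNReal.toReal_add]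
            ring
          exact lt_of_lt_of_le (by rw [hterm]; exact h1)
            (le_ciSup hbdd ⟨(1:ℝ), one_pos⟩)
      -- derive the norm bound
      have H : ∀ lam : ℝ, 0 < lam → lam < m / (m + 1) → lam * ((m:ℝ) + 1) ≤ C := by
        intro lam h0 h1
        have h2 := hC f lam h0
        have hset : {x : SP n | lam < HLmax (sμ n m) f x} = Set.univ :=
          Set.eq_univ_of_forall (key lam h0 h1)
        rw [hset, sμ_univ, hint] at h2
        have h3 : ((m : ENNReal) + (n : ENNReal)).toReal = (m : ℝ) + n := by
          simp [ENNReal.toReal_add]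
        rw [h3] at h2
        have h4 : (lam * ((m:ℝ) + 1)) * m ≤ C * m := by
          have hn' : (n : ℝ) = (m : ℝ) * m := by rw [hn]; push_cast; ring
          nlinarith [h2]
        exact le_of_mul_le_mul_right h4 hm0
      have hC0 : 0 < C := by
        have hl : (0:ℝ) < m / (m + 1) / 2 := by positivity
        have := H (m / (m + 1) / 2) hl (by
          have : (0:ℝ) < m / (m + 1) := by positivity
          linarith)
        nlinarith
      have hgoal : ((m + 1 : ℕ) : ℝ) - 1 = (m : ℝ) := by push_cast; ring
      rw [hgoal]
      refine le_of_forall_pos_le_add fun ε hε => ?_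
      rcases le_or_gt (m : ℝ) ε with hme | hme
      · linarith
      · have hlam0 : 0 < ((m:ℝ) - ε / 2) / ((m:ℝ) + 1) := by
          apply div_pos (by linarith) (by linarith)
        have hlam1 : ((m:ℝ) - ε / 2) / ((m:ℝ) + 1) < m / (m + 1) := by
          apply div_lt_div_of_pos_right (by linarith) (by linarith)
        have := H _ hlam0 hlam1
        rw [div_mul_cancel₀ _ (by linarith : ((m:ℝ) + 1) ≠ 0)] at this
        linarith
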